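/- arXiv:2510.27152 — 2 statements merged into one kernel-verified Lean document; each statement's English description precedes it below -/
import Mathlib

section
/- The matrix Y = L̃⁻¹ X L̃⁻¹ - X is negative semidefinite, where L̃ = I + L, L is the combinatorial Laplacian of an undirected graph on n vertices, and X = L̃ - (1/n)𝟏𝟏ᵀ. -/
open Matrix

private lemma symm_dot {n : Type*} [Fintype n] (A : Matrix n n ℝ) (hAs : Aᵀ = A)
    (v w : n → ℝ) : v ⬝ᵥ (A *ᵥ w) = (A *ᵥ v) ⬝ᵥ w := by
  rw [Matrix.dotProduct_mulVec]
  congr 1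
  conv_lhs => rw [← hAs]
  rw [Matrix.vecMul_transpose]

/-- The matrix `Y = L̃⁻¹ X L̃⁻¹ - X` is negative semidefinite, where `L̃ = I + L`
and `X = L̃ - (1/n)𝟏𝟏ᵀ`. -/
theorem stmt_5 {V : Type*} [Fintype V] [DecidableEq V]
    (G : SimpleGraph V) [DecidableRel G.Adj]
    (Lt X Y : Matrix V V ℝ)
    (hLt : Lt = 1 + G.lapMatrix ℝ)
    (hX : X = Lt - (1 / (Fintype.card V : ℝ)) • Matrix.of (fun _ _ => (1 : ℝ)))
    (hY : Y = Lt⁻¹ * X * Lt⁻¹ - X) :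
    ∀ s : V → ℝ, s ⬝ᵥ (Y *ᵥ s) ≤ 0 := by
  intro s
  set L := G.lapMatrix ℝ with hL
  have hLps : L.PosSemidef := G.posSemidef_lapMatrix ℝ
  have hLsymm : Lᵀ = L := hLps.1
  have hBpd : Lt.PosDef := hLt ▸ Matrix.PosDef.one.add_posSemidef hLps
  have hBunit : IsUnit Lt.det := (Matrix.isUnit_iff_isUnit_det _).1 hBpd.isUnit
  have hBsymm : Ltᵀ = Lt := hBpd.isHermitian
  have hBinvsymm : (Lt⁻¹)ᵀ = Lt⁻¹ := by
    rw [Matrix.transpose_nonsing_inv, hBsymm]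
  have hsu : s = Lt *ᵥ (Lt⁻¹ *ᵥ s) := by
    rw [Matrix.mulVec_mulVec, Matrix.mul_nonsing_inv _ hBunit, Matrix.one_mulVec]
  obtain ⟨u, hu⟩ : ∃ u, Lt⁻¹ *ᵥ s = u := ⟨_, rfl⟩
  rw [hu] at hsu
  -- constant vector
  have hB1 : Lt *ᵥ (fun _ => (1 : ℝ)) = fun _ => (1 : ℝ) := by
    rw [hLt, Matrix.add_mulVec, Matrix.one_mulVec, G.lapMatrix_mulVec_const_eq_zero, add_zero]
  -- sum of s equals sum of u
  have hsum : (fun _ => (1:ℝ)) ⬝ᵥ s = (fun _ => (1:ℝ)) ⬝ᵥ u := by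
    conv_lhs => rw [hsu, symm_dot Lt hBsymm, hB1]
  -- quadratic form of X
  have hXq : ∀ v : V → ℝ, v ⬝ᵥ (X *ᵥ v) =
      v ⬝ᵥ (Lt *ᵥ v) - (1 / (Fintype.card V : ℝ)) * ((fun _ => (1:ℝ)) ⬝ᵥ v) ^ 2 := by
    intro v
    have hJ : (Matrix.of (fun _ _ => (1:ℝ)) : Matrix V V ℝ) *ᵥ v
        = fun _ => (fun _ => (1:ℝ)) ⬝ᵥ v := by
      ext i; simp [Matrix.mulVec, dotProduct]
    rw [hX, Matrix.sub_mulVec, dotProduct_sub, Matrix.smul_mulVec, hJ,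
      dotProduct_smul]
    congr 1
    simp only [dotProduct, smul_eq_mul, sq, one_mul, ← Finset.sum_mul]
  -- first term equals u ⬝ᵥ X u
  have hterm1 : s ⬝ᵥ ((Lt⁻¹ * X * Lt⁻¹) *ᵥ s) = u ⬝ᵥ (X *ᵥ u) := by
    rw [Matrix.mul_assoc, ← Matrix.mulVec_mulVec, symm_dot Lt⁻¹ hBinvsymm, hu,
      ← Matrix.mulVec_mulVec, hu]
  have key : s ⬝ᵥ (Y *ᵥ s) = u ⬝ᵥ (Lt *ᵥ u) - s ⬝ᵥ (Lt *ᵥ s) := by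
    rw [hY, Matrix.sub_mulVec, dotProduct_sub, hterm1, hXq u, hXq s, hsum]
    ring
  rw [key]
  -- rewrite s ⬝ᵥ Lt s = u ⬝ᵥ Lt³ u
  have hs3 : s ⬝ᵥ (Lt *ᵥ s) = u ⬝ᵥ ((Lt * Lt * Lt) *ᵥ u) := by
    calc s ⬝ᵥ (Lt *ᵥ s) = (Lt *ᵥ u) ⬝ᵥ (Lt *ᵥ (Lt *ᵥ u)) := by rw [← hsu]
    _ = u ⬝ᵥ (Lt *ᵥ (Lt *ᵥ (Lt *ᵥ u))) := (symm_dot Lt hBsymm _ _).symm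
    _ = u ⬝ᵥ ((Lt * Lt * Lt) *ᵥ u) := by rw [Matrix.mulVec_mulVec, Matrix.mulVec_mulVec,
          Matrix.mul_assoc]
  rw [hs3]
  have hcube : Lt * Lt * Lt - Lt = (L + L) + (L*L + L*L + L*L) + L*L*L := by
    rw [hLt]; noncomm_ring
  have hdiff : u ⬝ᵥ (Lt *ᵥ u) - u ⬝ᵥ ((Lt * Lt * Lt) *ᵥ u)
      = -(u ⬝ᵥ (((L + L) + (L*L + L*L + L*L) + L*L*L) *ᵥ u)) := by
    rw [← hcube, Matrix.sub_mulVec, dotProduct_sub]; ring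
  rw [hdiff, neg_nonpos]
  have h1 : 0 ≤ u ⬝ᵥ (L *ᵥ u) := hLps.dotProduct_mulVec_nonneg u
  have h2 : 0 ≤ u ⬝ᵥ ((L * L) *ᵥ u) := by
    rw [← Matrix.mulVec_mulVec, symm_dot L hLsymm]
    exact Finset.sum_nonneg fun i _ => mul_self_nonneg _
  have h3 : 0 ≤ u ⬝ᵥ ((L * L * L) *ᵥ u) := by
    rw [Matrix.mul_assoc, ← Matrix.mulVec_mulVec, symm_dot L hLsymm, ← Matrix.mulVec_mulVec]
    exact hLps.dotProduct_mulVec_nonneg (L *ᵥ u)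
  simp only [Matrix.add_mulVec, dotProduct_add]
  linarith
end

section
/- For every opinion vector s ∈ ℝⁿ, the disruption at Friedkin–Johnsen equilibrium never exceeds the initial disruption: sᵀ L̃⁻¹ X L̃⁻¹ s ≤ sᵀ X s, where L̃ = I + L and X = L̃ - (1/n)𝟏𝟏ᵀ. -/
open Matrix

private lemma symm_dot_s6 {V : Type*} [Fintype V] (A : Matrix V V ℝ) (hA : Aᵀ = A)
    (x y : V → ℝ) : x ⬝ᵥ (A *ᵥ y) = (A *ᵥ x) ⬝ᵥ y := by
  rw [Matrix.dotProduct_mulVec, ← Matrix.mulVec_transpose, hA]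

/-- Disruption at Friedkin–Johnsen equilibrium never exceeds the initial disruption:
`sᵀ L̃⁻¹ X L̃⁻¹ s ≤ sᵀ X s` where `L̃ = I + L` and `X = L̃ - (1/n)𝟏𝟏ᵀ`. -/
theorem stmt_6 {V : Type*} [Fintype V] [DecidableEq V]
    (G : SimpleGraph V) [DecidableRel G.Adj]
    (Lt X : Matrix V V ℝ)
    (hLt : Lt = 1 + G.lapMatrix ℝ)
    (hX : X = Lt - (1 / (Fintype.card V : ℝ)) • Matrix.of (fun _ _ => (1 : ℝ)))
    (s : V → ℝ) :
    s ⬝ᵥ ((Lt⁻¹ * X * Lt⁻¹) *ᵥ s) ≤ s ⬝ᵥ (X *ᵥ s) := by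
  set L := G.lapMatrix ℝ with hLdef
  have hL : L.PosSemidef := SimpleGraph.posSemidef_lapMatrix ℝ G
  have hLsymm : Lᵀ = L := SimpleGraph.isSymm_lapMatrix (R := ℝ) G
  have hPD : Lt.PosDef := by
    rw [hLt]; exact Matrix.PosDef.add_posSemidef Matrix.PosDef.one hL
  have hLtsymm : Ltᵀ = Lt := hPD.isHermitian
  have hU : IsUnit Lt.det := hPD.det_pos.ne'.isUnit
  have hinv : Lt * Lt⁻¹ = 1 := Matrix.mul_nonsing_inv _ hU
  have hinvsymm : (Lt⁻¹)ᵀ = Lt⁻¹ := by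
    rw [Matrix.transpose_nonsing_inv, hLtsymm]
  set z := Lt⁻¹ *ᵥ s with hz
  have hs : Lt *ᵥ z = s := by
    rw [hz, Matrix.mulVec_mulVec, hinv, Matrix.one_mulVec]
  -- the ones matrix
  set J : Matrix V V ℝ := Matrix.of (fun _ _ => (1 : ℝ)) with hJ
  have hLJ : L * J = 0 := by
    ext i j
    have := congrFun (G.lapMatrix_mulVec_const_eq_zero (R := ℝ)) i
    simpa [Matrix.mul_apply, Matrix.mulVec, dotProduct, hJ] using this
  have hJL : J * L = 0 := by
    have : (L * J)ᵀ = 0 := by rw [hLJ]; simp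
    rw [Matrix.transpose_mul, hLsymm] at this
    have hJt : Jᵀ = J := by ext i j; simp [hJ]
    rwa [hJt] at this
  have hLtJ : Lt * J = J := by rw [hLt, add_mul, one_mul, hLJ, add_zero]
  have hJLt : J * Lt = J := by rw [hLt, mul_add, mul_one, hJL, add_zero]
  -- key matrix identity
  have key : Lt * X * Lt - X = L * L * L + (L * L + L * L + L * L) + (L + L) := by
    have h1 : Lt * X * Lt = Lt * Lt * Lt - (1 / (Fintype.card V : ℝ)) • J := by
      rw [hX]
      rw [Matrix.mul_sub, Matrix.sub_mul, Matrix.mul_smul, Matrix.smul_mul, hLtJ, hJLt]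
    rw [h1, hX, hLt]
    noncomm_ring
  -- rewrite both sides as quadratic forms in z
  have hLHS : s ⬝ᵥ ((Lt⁻¹ * X * Lt⁻¹) *ᵥ s) = z ⬝ᵥ (X *ᵥ z) := by
    rw [← Matrix.mulVec_mulVec, ← Matrix.mulVec_mulVec, symm_dot_s6 Lt⁻¹ hinvsymm, ← hz]
  have hRHS : s ⬝ᵥ (X *ᵥ s) = z ⬝ᵥ ((Lt * X * Lt) *ᵥ z) := by
    conv_lhs => rw [← hs]
    rw [← symm_dot_s6 Lt hLtsymm]
    simp [Matrix.mulVec_mulVec, Matrix.mul_assoc]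
  rw [hLHS, hRHS]
  have hdiff : 0 ≤ z ⬝ᵥ ((Lt * X * Lt - X) *ᵥ z) := by
    rw [key]
    have hq : ∀ x : V → ℝ, 0 ≤ x ⬝ᵥ (L *ᵥ x) := fun x => by
      simpa using hL.dotProduct_mulVec_nonneg x
    have h3 : 0 ≤ z ⬝ᵥ ((L * L * L) *ᵥ z) := by
      have : z ⬝ᵥ ((L * L * L) *ᵥ z) = (L *ᵥ z) ⬝ᵥ (L *ᵥ (L *ᵥ z)) := by
        rw [← Matrix.mulVec_mulVec, ← Matrix.mulVec_mulVec, symm_dot_s6 L hLsymm]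
      rw [this]; exact hq _
    have h2 : 0 ≤ z ⬝ᵥ ((L * L) *ᵥ z) := by
      have : z ⬝ᵥ ((L * L) *ᵥ z) = (L *ᵥ z) ⬝ᵥ (L *ᵥ z) := by
        rw [← Matrix.mulVec_mulVec, symm_dot_s6 L hLsymm]
      rw [this]
      exact Finset.sum_nonneg fun i _ => mul_self_nonneg _
    have h1 : 0 ≤ z ⬝ᵥ (L *ᵥ z) := hq z
    simp only [Matrix.add_mulVec, dotProduct_add]
    positivity
  have := hdiff
  rw [Matrix.sub_mulVec, dotProduct_sub, sub_nonneg] at this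
  exact this
end
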